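/- Define b_{m,n} = 1 + (F_{m-1}·n + F_{m-2})/(F_m·n + F_{m-1}) and a_{0,n} = 1, a_{m,n} = a_{m-1,n}·b_{(m-1)/2, n} if m is odd, a_{m,n} = a_{m-1,n}·b_{m/2 - 1, n} if m is even. Then a_{m,n} = (F_{(m-1)/2}·n + F_{(m-1)/2 - 1})(F_{(m+1)/2}·n + F_{(m-1)/2}) when m is odd, and a_{m,n} = (F_{m/2}·n + F_{m/2 - 1})² when m is even, for all m ≥ 0 and positive integers n. -/

import Mathlib

theorem fiboquadratic_explicit
    (F : ℤ → ℤ) (h0 : F 0 = 0) (h1 : F 1 = 1)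
    (hrec : ∀ k : ℤ, F (k + 1) = F k + F (k - 1))
    (n : ℕ) (hn : 1 ≤ n)
    (b : ℤ → ℚ)
    (hbden : ∀ m : ℤ, 0 ≤ m → (F m * n + F (m - 1) : ℚ) ≠ 0)
    (hb : ∀ m : ℤ, b m = 1 + ((F (m - 1) : ℚ) * n + (F (m - 2) : ℚ)) /
        ((F m : ℚ) * n + (F (m - 1) : ℚ)))
    (a : ℕ → ℚ) (ha0 : a 0 = 1)
    (haodd : ∀ m : ℕ, Odd m → a m = a (m - 1) * b (((m : ℤ) - 1) / 2))
    (haeven : ∀ m : ℕ, Even m → m ≠ 0 → a m = a (m - 1) * b ((m : ℤ) / 2 - 1)) :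
    ∀ m : ℕ,
      (Odd m → a m = ((F (((m : ℤ) - 1) / 2) : ℚ) * n + (F (((m : ℤ) - 1) / 2 - 1) : ℚ)) *
          ((F (((m : ℤ) - 1) / 2 + 1) : ℚ) * n + (F (((m : ℤ) - 1) / 2) : ℚ))) ∧
      (Even m → a m = ((F ((m : ℤ) / 2) : ℚ) * n + (F ((m : ℤ) / 2 - 1) : ℚ)) ^ 2) := by
  have hFm1 : F (-1) = 1 := by
    have h := hrec 0
    simp [h0, h1] at h
    omega
  have hG : ∀ k : ℤ, (F (k + 1) : ℚ) * n + F k =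
      ((F k : ℚ) * n + F (k - 1)) + ((F (k - 1) : ℚ) * n + F (k - 2)) := by
    intro k
    have e1 := hrec k
    have e2 := hrec (k - 1)
    rw [show k - 1 + 1 = k from by ring, show k - 1 - 1 = k - 2 from by ring] at e2
    rw [e1, e2]
    push_cast
    ring
  have hbf : ∀ k : ℤ, 0 ≤ k →
      b k = ((F (k + 1) : ℚ) * n + F k) / ((F k : ℚ) * n + F (k - 1)) := by
    intro k hk
    rw [hb k, hG k]
    have hne := hbden k hk
    field_simp
    rw [one_add_div (by rwa [mul_comm] at hne)]
  intro m
  induction m with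
  | zero =>
    refine ⟨fun h => absurd h (by decide), fun _ => ?_⟩
    norm_num [ha0, h0, hFm1]
  | succ m ih =>
    rcases Nat.even_or_odd m with hm | hm
    · obtain ⟨k, hk⟩ := hm
      constructor
      · intro _
        have hd1 : (((m + 1 : ℕ) : ℤ) - 1) / 2 = (k : ℤ) := by push_cast; omega
        have hd2 : ((m : ℕ) : ℤ) / 2 = (k : ℤ) := by push_cast; omega
        have ham := ih.2 ⟨k, hk⟩
        rw [hd2] at ham
        have h := haodd (m + 1) ⟨m / 2, by omega⟩
        simp only [Nat.add_sub_cancel] at h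
        rw [h, hd1, ham, hbf k (by positivity)]
        have hne := hbden k (by positivity)
        field_simp
      · intro h
        exact absurd h (by
          obtain ⟨j, hj⟩ := id h
          omega)
    · obtain ⟨k, hk⟩ := hm
      constructor
      · intro h
        obtain ⟨j, hj⟩ := h
        omega
      · intro _
        have hd1 : ((m + 1 : ℕ) : ℤ) / 2 - 1 = (k : ℤ) := by push_cast; omega
        have hd2 : (((m : ℕ) : ℤ) - 1) / 2 = (k : ℤ) := by push_cast; omega
        have hd3 : ((m + 1 : ℕ) : ℤ) / 2 = (k : ℤ) + 1 := by push_cast; omega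
        have ham := ih.1 ⟨k, by omega⟩
        rw [hd2] at ham
        have h := haeven (m + 1) (by exact ⟨k + 1, by omega⟩) (by omega)
        simp only [Nat.add_sub_cancel] at h
        rw [h, hd1, ham, hbf k (by positivity), hd3]
        have hne := hbden k (by positivity)
        field_simp
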